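/- Let n ≥ 3 be an integer, let h : ℝ → ℝ be continuously differentiable with h(r) > 0 for all r, let R : [0, ∞) → ℝ be differentiable with R'(t) = -(n-1)·h'(R(t))/h(R(t)) and R(0) = a, and let f̄ : [0, ∞) → ℝ be differentiable with f̄'(t) = -2(n-1)·(1 - f̄(t))·h'(R(t))²/h(R(t))² and f̄(0) = f̄₀ ∈ [0, 1]. Then (1 - f̄(t))·h(R(t))² = (1 - f̄₀)·h(a)² for all t ≥ 0. -/

import Mathlib

/-- Lemma 3.5 of the paper: the quantity `(1 - f̄(t))·h(R(t))²` is conserved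
along the coupled ODEs `R' = -(n-1)·h'(R)/h(R)` and `f̄' = -2(n-1)(1-f̄)·h'(R)²/h(R)²`. -/
theorem stmt_3 (n : ℕ) (hn : 3 ≤ n) (h : ℝ → ℝ) (hC1 : ContDiff ℝ 1 h)
    (hpos : ∀ r : ℝ, 0 < h r)
    (a : ℝ) (R : ℝ → ℝ) (hR0 : R 0 = a)
    (hR : ∀ t : ℝ, 0 ≤ t →
      HasDerivAt R (-(n - 1 : ℝ) * deriv h (R t) / h (R t)) t)
    (f₀ : ℝ) (hf₀ : 0 ≤ f₀) (hf₀' : f₀ ≤ 1)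
    (f : ℝ → ℝ) (hf0 : f 0 = f₀)
    (hf : ∀ t : ℝ, 0 ≤ t →
      HasDerivAt f
        (-2 * (n - 1 : ℝ) * (1 - f t) * (deriv h (R t)) ^ 2 / (h (R t)) ^ 2) t) :
    ∀ t : ℝ, 0 ≤ t → (1 - f t) * (h (R t)) ^ 2 = (1 - f₀) * (h a) ^ 2 := by
  intro t ht
  set Λ : ℝ → ℝ := fun s => (1 - f s) * (h (R s)) ^ 2 with hΛ
  have key : ∀ s : ℝ, 0 ≤ s → HasDerivAt Λ 0 s := by
    intro s hs
    have hne : h (R s) ≠ 0 := (hpos (R s)).ne'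
    have hhd : HasDerivAt h (deriv h (R s)) (R s) :=
      ((hC1.differentiable one_ne_zero) (R s)).hasDerivAt
    have hRs := hR s hs
    have hcomp : HasDerivAt (fun u => h (R u))
        (deriv h (R s) * (-(n - 1 : ℝ) * deriv h (R s) / h (R s))) s := hhd.comp s hRs
    have hsq : HasDerivAt (fun u => (h (R u)) ^ 2)
        ((2 : ℕ) * (h (R s)) ^ 1 * (deriv h (R s) * (-(n - 1 : ℝ) * deriv h (R s) / h (R s)))) s :=
      hcomp.pow 2
    have h1f : HasDerivAt (fun u => 1 - f u)
        (-( -2 * (n - 1 : ℝ) * (1 - f s) * (deriv h (R s)) ^ 2 / (h (R s)) ^ 2)) s :=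
      (hf s hs).const_sub 1
    have hmul := h1f.mul hsq
    convert hmul using 1
    · rfl
    · rfl
    · rfl
    field_simp
    ring
  have hcont : ContinuousOn Λ (Set.Icc 0 t) := fun x hx =>
    (key x hx.1).continuousAt.continuousWithinAt
  have hderiv : ∀ x ∈ Set.Ico (0 : ℝ) t, HasDerivWithinAt Λ 0 (Set.Ici x) x :=
    fun x hx => (key x hx.1).hasDerivWithinAt
  have := constant_of_has_deriv_right_zero hcont hderiv t (by simp [ht])
  simpa [hΛ, hR0, hf0] using this
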